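/- With notation as in Tweedie's formula — p(x) = ∫ N(x; μ(z), γ²I) q(z) dz, D(x) = posterior mean of μ(z), f convex differentiable, g(x) = −log p(x), T(x) = prox_{γ²f}(D(x)) — a point x* is a fixed point of T if and only if ∇f(x*) + ∇g(x*) = 0, i.e., x* is a critical point of f + g. -/

import Mathlib

open Real MeasureTheory

/-- Isotropic Gaussian density on `ℝⁿ` with mean `m` and covariance `γ²I`. -/
noncomputable def gaussDens (n : ℕ) (γ : ℝ) (x m : EuclideanSpace ℝ (Fin n)) : ℝ :=
  (2 * π * γ ^ 2) ^ (-(n : ℝ) / 2) * Real.exp (-‖x - m‖ ^ 2 / (2 * γ ^ 2))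

section aux

variable {F : Type*} [NormedAddCommGroup F] [InnerProductSpace ℝ F] [CompleteSpace F]

/-- Subgradient inequality for a convex differentiable function. -/
lemma subgrad_ineq {f : F → ℝ} (hconv : ConvexOn ℝ Set.univ f) {x s : F}
    (hd : HasGradientAt f s x) (y : F) :
    f x + inner ℝ s (y - x) ≤ f y := by
  set v := y - x with hv
  have hline : HasDerivAt (fun t : ℝ => x + t • v) v 0 := by
    simpa using ((hasDerivAt_id (0:ℝ)).smul_const v).const_add x
  have hg : HasDerivAt (fun t : ℝ => f (x + t • v)) (inner ℝ s v : ℝ) 0 := by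
    have hFD : HasFDerivAt f ((InnerProductSpace.toDual ℝ F) s) (x + (0:ℝ) • v) := by
      simpa using hd.hasFDerivAt
    have := hFD.comp_hasDerivAt 0 hline
    simpa [InnerProductSpace.toDual_apply_apply, Function.comp_def] using this
  have hslope := hasDerivAt_iff_tendsto_slope.1 hg
  have hslope' : Filter.Tendsto (slope (fun t : ℝ => f (x + t • v)) 0)
      (nhdsWithin 0 (Set.Ioi 0)) (nhds (inner ℝ s v : ℝ)) :=
    hslope.mono_left (nhdsWithin_mono _ (fun t ht => by
      simp only [Set.mem_compl_iff, Set.mem_singleton_iff]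
      exact ne_of_gt ht))
  have hbound : (inner ℝ s v : ℝ) ≤ f y - f x := by
    refine le_of_tendsto hslope' ?_
    filter_upwards [Ioo_mem_nhdsGT_of_mem (by norm_num : (0:ℝ) ∈ Set.Ico 0 1)]
      with t ht
    have ht0 : 0 < t := ht.1
    have ht1 : t < 1 := ht.2
    have hconvx : f (x + t • v) ≤ (1 - t) * f x + t * f y := by
      have := hconv.2 (Set.mem_univ x) (Set.mem_univ y)
        (by linarith : (0:ℝ) ≤ 1 - t) (le_of_lt ht0) (by ring)
      have hxe : (1 - t) • x + t • y = x + t • v := by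
        simp [hv, smul_sub, sub_smul]; abel
      simpa [hxe, smul_eq_mul] using this
    have : slope (fun t : ℝ => f (x + t • v)) 0 t
        = (f (x + t • v) - f x) / t := by
      simp [slope_def_field]
    rw [this, div_le_iff₀ ht0]
    nlinarith [hconvx]
  linarith [real_inner_comm s v ▸ hbound]

/-- Gradient of `u ↦ (1/2)‖v - u‖²` is `u - v`. -/
lemma grad_quad (v u : F) :
    HasGradientAt (fun w : F => (1/2 : ℝ) * ‖v - w‖ ^ 2) (u - v) u := by
  have h1 : HasFDerivAt (fun w : F => v - w)
      (-(ContinuousLinearMap.id ℝ F)) u := by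
    simpa using (hasFDerivAt_id u).const_sub v
  have h2 := h1.norm_sq
  have h3 := h2.const_mul (1/2 : ℝ)
  have hCLM : ((1/2 : ℝ) • (2 • ((innerSL ℝ) (v - u)).comp (-ContinuousLinearMap.id ℝ F)) :
      F →L[ℝ] ℝ) = (InnerProductSpace.toDual ℝ F) (u - v) := by
    ext w
    simp [InnerProductSpace.toDual_apply_apply, real_inner_smul_left, inner_sub_left,
      two_smul, real_inner_comm]
    ring
  show HasFDerivAt _ ((InnerProductSpace.toDual ℝ F) (u - v)) u
  exact hCLM ▸ h3

end aux

/-- With `p(x) = ∫ N(x; μ(z), γ²I) q(dz)`, `D(x)` the posterior mean of `μ(z)` (satisfying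
Tweedie's formula `D(x) − x = −γ²∇g(x)` for `g = −log p`), `f` convex differentiable and
`T = prox_{γ²f} ∘ D`, a point `x*` is a fixed point of `T` iff `∇f(x*) + ∇g(x*) = 0`. -/
theorem stmt_9 {Z : Type*} [MeasurableSpace Z] (q : Measure Z) [IsProbabilityMeasure q]
    (n : ℕ) (γ : ℝ) (hγ : 0 < γ) (μf : Z → EuclideanSpace ℝ (Fin n))
    (p : EuclideanSpace ℝ (Fin n) → ℝ)
    (hp : ∀ x, p x = ∫ z, gaussDens n γ x (μf z) ∂q)
    (hppos : ∀ x, 0 < p x)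
    (D : EuclideanSpace ℝ (Fin n) → EuclideanSpace ℝ (Fin n))
    (hD : ∀ x, D x = ∫ z, (gaussDens n γ x (μf z) / p x) • μf z ∂q)
    (f g : EuclideanSpace ℝ (Fin n) → ℝ)
    (hg : ∀ x, g x = -Real.log (p x))
    (f' g' : EuclideanSpace ℝ (Fin n) → EuclideanSpace ℝ (Fin n))
    (hconv : ConvexOn ℝ Set.univ f)
    (hfdiff : ∀ x, HasGradientAt f (f' x) x)
    (hgdiff : ∀ x, HasGradientAt g (g' x) x)
    -- Tweedie's formula:
    (htweedie : ∀ x, D x - x = -(γ ^ 2) • g' x)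
    (P : EuclideanSpace ℝ (Fin n) → EuclideanSpace ℝ (Fin n))
    (hP : ∀ v u : EuclideanSpace ℝ (Fin n),
      γ ^ 2 * f (P v) + (1 / 2) * ‖v - P v‖ ^ 2 ≤ γ ^ 2 * f u + (1 / 2) * ‖v - u‖ ^ 2)
    (T : EuclideanSpace ℝ (Fin n) → EuclideanSpace ℝ (Fin n))
    (hT : ∀ x, T x = P (D x))
    (xstar : EuclideanSpace ℝ (Fin n)) :
    T xstar = xstar ↔ f' xstar + g' xstar = 0 := by
  have hγ2 : (γ:ℝ) ^ 2 ≠ 0 := pow_ne_zero 2 (ne_of_gt hγ)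
  set v := D xstar with hv
  have hvx : v - xstar = -(γ ^ 2) • g' xstar := htweedie xstar
  constructor
  · intro hfix
    -- xstar minimizes φ(u) = γ² f u + ½‖v-u‖²
    have hx : P v = xstar := by rw [← hT xstar]; exact hfix
    have hmin : IsLocalMin (fun u => γ ^ 2 * f u + (1/2 : ℝ) * ‖v - u‖ ^ 2) xstar := by
      apply Filter.Eventually.of_forall
      intro u
      have := hP v u
      rw [hx] at this
      simpa using this
    -- gradient of φ at xstar
    have hgrad : HasFDerivAt (fun u => γ ^ 2 * f u + (1/2 : ℝ) * ‖v - u‖ ^ 2)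
        (InnerProductSpace.toDual ℝ _ ((γ ^ 2) • f' xstar + (xstar - v))) xstar := by
      have hf1 : HasFDerivAt (fun u => γ ^ 2 * f u)
          ((γ ^ 2) • (InnerProductSpace.toDual ℝ _ (f' xstar))) xstar := by
        simpa [smul_eq_mul] using (hfdiff xstar).hasFDerivAt.const_mul (γ ^ 2)
      have hq : HasFDerivAt (fun u => (1/2 : ℝ) * ‖v - u‖ ^ 2)
          (InnerProductSpace.toDual ℝ _ (xstar - v)) xstar := (grad_quad v xstar)
      have := hf1.add hq
      rw [show (InnerProductSpace.toDual ℝ (EuclideanSpace ℝ (Fin n))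
          ((γ ^ 2) • f' xstar + (xstar - v)) : EuclideanSpace ℝ (Fin n) →L[ℝ] ℝ)
          = (γ ^ 2) • (InnerProductSpace.toDual ℝ _ (f' xstar))
            + InnerProductSpace.toDual ℝ _ (xstar - v) by
        ext w; simp [InnerProductSpace.toDual_apply_apply, inner_add_left, real_inner_smul_left]]
      exact this
    have hzero := hmin.hasFDerivAt_eq_zero hgrad
    have hzero' : (γ ^ 2) • f' xstar + (xstar - v) = 0 :=
      (InnerProductSpace.toDual ℝ (EuclideanSpace ℝ (Fin n))).injective
        (hzero.trans (map_zero _).symm)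
    have hxv : xstar - v = (γ ^ 2) • g' xstar := by
      rw [show xstar - v = -(v - xstar) by abel, hvx]; simp
    rw [hxv, ← smul_add] at hzero'
    exact (smul_eq_zero.1 hzero').resolve_left hγ2
  · intro hcrit
    -- v - xstar = γ² f' xstar
    have hg'eq : g' xstar = -f' xstar := eq_neg_of_add_eq_zero_right hcrit
    have hvx2 : v - xstar = (γ ^ 2) • f' xstar := by
      rw [hvx, hg'eq]; simp
    -- subgradient inequality
    have hsub := subgrad_ineq hconv (hfdiff xstar) (P v)
    have hPle := hP v xstar
    -- expand ‖v - P v‖²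
    have hexp : ‖v - P v‖ ^ 2
        = ‖v - xstar‖ ^ 2 - 2 * inner ℝ (v - xstar) (P v - xstar) + ‖P v - xstar‖ ^ 2 := by
      have : v - P v = (v - xstar) - (P v - xstar) := by abel
      rw [this, norm_sub_sq_real]
    have hinner : (inner ℝ (v - xstar) (P v - xstar) : ℝ)
        = γ ^ 2 * inner ℝ (f' xstar) (P v - xstar) := by
      rw [hvx2, real_inner_smul_left]
    have hPx : ‖P v - xstar‖ ^ 2 ≤ 0 := by
      have h2 : γ ^ 2 * (f xstar + inner ℝ (f' xstar) (P v - xstar)) ≤ γ ^ 2 * f (P v) :=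
        mul_le_mul_of_nonneg_left hsub (sq_nonneg γ)
      nlinarith [hPle, hexp, hinner, h2]
    have : P v = xstar := by
      have := le_antisymm hPx (sq_nonneg _)
      have hn : ‖P v - xstar‖ = 0 := by nlinarith [norm_nonneg (P v - xstar)]
      rw [norm_eq_zero, sub_eq_zero] at hn
      exact hn
    rw [hT xstar, ← hv, this]
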